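/- Let (T_n) be the Tribonacci sequence (T_0 = 0, T_1 = T_2 = 1, T_{n+3} = T_{n+2}+T_{n+1}+T_n) and φ ≈ 1.839 its dominant root. Every solution of x_{n+1} = 1/(x_n(x_{n-1}+1)+1) with initial values outside the forbidden set converges to 1/φ, the unique real root of μ³ + μ² + μ = 1. -/

import Mathlib

noncomputable def triSeq (a b c : ℝ) : ℕ → ℝ
  | 0 => a
  | 1 => b
  | 2 => c
  | (n+3) => triSeq a b c (n+2) + triSeq a b c (n+1) + triSeq a b c n

theorem triSeq_ratio_tendsto (a b c φ : ℝ) (hφ : φ ^ 3 = φ ^ 2 + φ + 1)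
    (hnz : a + (φ ^ 2 - φ) * b + φ * c ≠ 0) :
    Filter.Tendsto (fun n : ℕ => triSeq a b c (n + 1) / triSeq a b c (n + 2))
      Filter.atTop (nhds (1 / φ)) := by
  have hφ1 : (5:ℝ)/3 < φ := by nlinarith [sq_nonneg (φ + 1/3), sq_nonneg (φ - 5/3)]
  have hφ2 : φ < 2 := by nlinarith [sq_nonneg (φ + 1/3), sq_nonneg (φ - 5/3), sq_nonneg (φ-2)]
  have hφ0 : (0:ℝ) < φ := by linarith
  have hφn : φ ≠ 0 := ne_of_gt hφ0
  set v : ℕ → ℝ := triSeq a b c with hvdef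
  have hv0 : v 0 = a := rfl
  have hv1 : v 1 = b := rfl
  have hv2 : v 2 = c := rfl
  have hvr : ∀ n, v (n+3) = v (n+2) + v (n+1) + v n := fun n => rfl
  set s : ℕ → ℝ := fun m => v (m+1) - φ * v m with hsdef
  have hsr : ∀ m, s (m+2) = -(φ-1) * s (m+1) - (1/φ) * s m := by
    intro m
    simp only [hsdef]
    rw [hvr m]
    field_simp
    linear_combination (-(v (m+1))) * hφ
  set Q : ℕ → ℝ := fun m => s (m+1)^2 + (φ-1) * s m * s (m+1) + (1/φ) * s m ^ 2 with hQdef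
  have hQstep : ∀ m, Q (m+1) = (1/φ) * Q m := by
    intro m
    simp only [hQdef]
    rw [hsr m]
    field_simp
    ring
  have hQm : ∀ m, Q m = (1/φ)^m * Q 0 := by
    intro m
    induction m with
    | zero => simp
    | succ n ih => rw [hQstep n, ih, pow_succ]; ring
  set δ : ℝ := 1/φ - (φ-1)^2/4 with hδdef
  have hδ : 0 < δ := by
    have h4 : (φ-1)^2 * φ < 4 := by nlinarith
    have h5 : (φ-1)^2/4 < 1/φ := by rw [div_lt_div_iff₀ (by norm_num) hφ0]; linarith
    rw [hδdef]; linarith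
  have hQlb : ∀ m, δ * s m ^ 2 ≤ Q m := by
    intro m
    simp only [hQdef, hδdef]
    nlinarith [sq_nonneg (s (m+1) + (φ-1) * s m / 2)]
  have hQ0 : 0 ≤ Q 0 := le_trans (mul_nonneg hδ.le (sq_nonneg _)) (hQlb 0)
  set r : ℝ := Real.sqrt (1/φ) with hrdef
  have hr0 : 0 ≤ r := Real.sqrt_nonneg _
  have hr2 : r^2 = 1/φ := Real.sq_sqrt (by positivity)
  have hr1 : r < 1 := by
    have h1φ : 1/φ < 1 := by rw [div_lt_one hφ0]; linarith
    nlinarith [hr2, hr0]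
  set K : ℝ := Real.sqrt (Q 0 / δ) with hKdef
  have hK0 : 0 ≤ K := Real.sqrt_nonneg _
  have hK2 : K^2 = Q 0 / δ := Real.sq_sqrt (div_nonneg hQ0 hδ.le)
  have habs : ∀ m, |s m| ≤ K * r^m := by
    intro m
    have h1 : s m ^ 2 ≤ (K * r^m)^2 := by
      have h2 : (K * r^m)^2 = (Q 0 / δ) * (1/φ)^m := by
        rw [mul_pow, hK2, ← pow_mul, mul_comm m 2, pow_mul, hr2]
      rw [h2]
      have h3 := hQlb m
      rw [hQm m] at h3
      rw [div_mul_eq_mul_div, le_div_iff₀ hδ]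
      linarith
    have h4 := Real.sqrt_le_sqrt h1
    rwa [Real.sqrt_sq_eq_abs, Real.sqrt_sq (by positivity)] at h4
  set w : ℕ → ℝ := fun m => v m / φ^m with hwdef
  have hwd : ∀ m, dist (w m) (w (m+1)) ≤ (K/φ) * (r/φ)^m := by
    intro m
    rw [Real.dist_eq]
    have h1 : w m - w (m+1) = -(s m) / φ^(m+1) := by
      simp only [hwdef, hsdef]
      field_simp
      ring
    rw [h1, abs_div, abs_neg, abs_of_pos (pow_pos hφ0 (m+1))]
    have h2 : (K/φ) * (r/φ)^m = (K * r^m) / φ^(m+1) := by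
      rw [div_pow, div_mul_div_comm, pow_succ, mul_comm φ (φ^m)]
    rw [h2]
    exact div_le_div_of_nonneg_right (habs m) (pow_pos hφ0 (m+1)).le
  have hrφ : r/φ < 1 := by
    rw [div_lt_one hφ0]; linarith
  have hc : CauchySeq w := cauchySeq_of_le_geometric (r/φ) (K/φ) hrφ hwd
  obtain ⟨A, hA⟩ := cauchySeq_tendsto_of_complete hc
  have hGv : ∀ m, v m + (φ^2-φ) * v (m+1) + φ * v (m+2) = φ^m * (a + (φ^2-φ)*b + φ*c) := by
    intro m
    induction m with
    | zero => simp [hv0, hv1, hv2]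
    | succ n ih =>
      rw [hvr n, pow_succ]
      linear_combination φ * ih - (v (n+1)) * hφ
  have hGw : ∀ m, w m + (φ^3-φ^2) * w (m+1) + φ^3 * w (m+2) = a + (φ^2-φ)*b + φ*c := by
    intro m
    have h1 : w m + (φ^3-φ^2) * w (m+1) + φ^3 * w (m+2)
        = (v m + (φ^2-φ) * v (m+1) + φ * v (m+2)) / φ^m := by
      simp only [hwdef, pow_succ]
      field_simp
    rw [h1, hGv m, mul_comm, mul_div_assoc, div_self (pow_ne_zero m hφn), mul_one]
  have hsh1 : Filter.Tendsto (fun m => w (m+1)) Filter.atTop (nhds A) :=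
    hA.comp (Filter.tendsto_add_atTop_nat 1)
  have hsh2 : Filter.Tendsto (fun m => w (m+2)) Filter.atTop (nhds A) :=
    hA.comp (Filter.tendsto_add_atTop_nat 2)
  have hlim : A + (φ^3-φ^2) * A + φ^3 * A = a + (φ^2-φ)*b + φ*c := by
    have t1 : Filter.Tendsto (fun m => w m + (φ^3-φ^2) * w (m+1) + φ^3 * w (m+2))
        Filter.atTop (nhds (A + (φ^3-φ^2) * A + φ^3 * A)) :=
      (hA.add (hsh1.const_mul _)).add (hsh2.const_mul _)
    have t2 : Filter.Tendsto (fun m => w m + (φ^3-φ^2) * w (m+1) + φ^3 * w (m+2))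
        Filter.atTop (nhds (a + (φ^2-φ)*b + φ*c)) := by
      simp only [hGw]; exact tendsto_const_nhds
    exact tendsto_nhds_unique t1 t2
  have hAne : A ≠ 0 := by
    intro h
    rw [h] at hlim
    apply hnz
    rw [← hlim]; ring
  have hmain : Filter.Tendsto (fun n : ℕ => w (n+1) / (φ * w (n+2))) Filter.atTop
      (nhds (A / (φ * A))) :=
    hsh1.div (hsh2.const_mul φ) (mul_ne_zero hφn hAne)
  have heq : ∀ n : ℕ, w (n+1) / (φ * w (n+2)) = v (n+1) / v (n+2) := by
    intro n
    rcases eq_or_ne (v (n+2)) 0 with h | h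
    · simp [hwdef, h]
    · simp only [hwdef]
      field_simp
      ring
  have hval : A / (φ * A) = 1 / φ := by
    field_simp
  rw [← hval]
  exact hmain.congr heq

theorem stmt_18 (T : ℤ → ℝ) (hT0 : T 0 = 0) (hT1 : T 1 = 1) (hT2 : T 2 = 1)
    (hT : ∀ n : ℤ, T (n + 3) = T (n + 2) + T (n + 1) + T n)
    (φ : ℝ) (hφ : φ ^ 3 = φ ^ 2 + φ + 1)
    (x : ℤ → ℝ)
    (hx : ∀ n : ℤ, 0 ≤ n → x (n + 1) = 1 / (x n * (x (n - 1) + 1) + 1))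
    (hforb : ∀ n : ℤ, -1 ≤ n →
      T n * x (-1) * x 0 + (T n + T (n - 1)) * x 0 + T (n + 1) ≠ 0)
    (hnd : x (-1) * x 0 + (φ ^ 2 - φ) * x 0 + φ ≠ 0) :
    Filter.Tendsto (fun n : ℕ => x (n : ℤ)) Filter.atTop (nhds (1 / φ)) ∧
      (1 / φ) ^ 3 + (1 / φ) ^ 2 + (1 / φ) - 1 = 0 := by
  have hφ1 : (5:ℝ)/3 < φ := by nlinarith [sq_nonneg (φ + 1/3), sq_nonneg (φ - 5/3)]
  have hφn : φ ≠ 0 := by intro h; rw [h] at hφ1; norm_num at hφ1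
  have hTm1 : T (-1) = 0 := by
    have h := hT (-1); norm_num at h; rw [hT2, hT1, hT0] at h; linarith
  have hTm2 : T (-2) = 1 := by
    have h := hT (-2); norm_num at h; rw [hT1, hT0, hTm1] at h; linarith
  have hTm3 : T (-3) = -1 := by
    have h := hT (-3); norm_num at h; rw [hT0, hTm1, hTm2] at h; linarith
  set v : ℕ → ℝ := triSeq (x (-1) * x 0) (x 0) 1 with hvdef
  have hv0 : v 0 = x (-1) * x 0 := rfl
  have hv1 : v 1 = x 0 := rfl
  have hv2 : v 2 = 1 := rfl
  have hvr : ∀ n, v (n+3) = v (n+2) + v (n+1) + v n := fun n => rfl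
  have hvT : ∀ k : ℕ, v k = T ((k:ℤ)-2) * (x (-1) * x 0)
      + (T ((k:ℤ)-2) + T ((k:ℤ)-3)) * x 0 + T ((k:ℤ)-1) := by
    have base0 : v 0 = T ((0:ℤ)-2) * (x (-1) * x 0)
        + (T ((0:ℤ)-2) + T ((0:ℤ)-3)) * x 0 + T ((0:ℤ)-1) := by
      rw [hv0]; norm_num [hTm1, hTm2, hTm3]
    have base1 : v 1 = T ((1:ℤ)-2) * (x (-1) * x 0)
        + (T ((1:ℤ)-2) + T ((1:ℤ)-3)) * x 0 + T ((1:ℤ)-1) := by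
      rw [hv1]; norm_num [hTm1, hTm2, hT0]
    have base2 : v 2 = T ((2:ℤ)-2) * (x (-1) * x 0)
        + (T ((2:ℤ)-2) + T ((2:ℤ)-3)) * x 0 + T ((2:ℤ)-1) := by
      rw [hv2]; norm_num [hT0, hTm1, hT1]
    have H : ∀ k : ℕ,
        (v k = T ((k:ℤ)-2) * (x (-1) * x 0)
          + (T ((k:ℤ)-2) + T ((k:ℤ)-3)) * x 0 + T ((k:ℤ)-1)) ∧
        (v (k+1) = T (((k+1:ℕ):ℤ)-2) * (x (-1) * x 0)
          + (T (((k+1:ℕ):ℤ)-2) + T (((k+1:ℕ):ℤ)-3)) * x 0 + T (((k+1:ℕ):ℤ)-1)) ∧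
        (v (k+2) = T (((k+2:ℕ):ℤ)-2) * (x (-1) * x 0)
          + (T (((k+2:ℕ):ℤ)-2) + T (((k+2:ℕ):ℤ)-3)) * x 0 + T (((k+2:ℕ):ℤ)-1)) := by
      intro k
      induction k with
      | zero => exact ⟨by exact_mod_cast base0, by exact_mod_cast base1, by exact_mod_cast base2⟩
      | succ n ih =>
        refine ⟨ih.2.1, ih.2.2, ?_⟩
        have c2 : ((n+1+2:ℕ):ℤ) - 2 = ((n:ℤ)-2)+3 := by push_cast; ring
        have c3 : ((n+1+2:ℕ):ℤ) - 3 = ((n:ℤ)-3)+3 := by push_cast; ring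
        have c1 : ((n+1+2:ℕ):ℤ) - 1 = ((n:ℤ)-1)+3 := by push_cast; ring
        have hv3 : v (n+1+2) = v (n+2) + v (n+1) + v n := hvr n
        rw [hv3, ih.1, ih.2.1, ih.2.2, c2, c3, c1,
          hT ((n:ℤ)-2), hT ((n:ℤ)-3), hT ((n:ℤ)-1)]
        push_cast
        ring_nf
    exact fun k => (H k).1
  have hvne : ∀ k : ℕ, v (k+1) ≠ 0 := by
    intro k
    have h := hforb ((k:ℤ)-1) (by omega)
    have c1 : ((k+1:ℕ):ℤ)-2 = (k:ℤ)-1 := by push_cast; ring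
    have c2 : ((k+1:ℕ):ℤ)-3 = (k:ℤ)-1-1 := by push_cast; ring
    have c3 : ((k+1:ℕ):ℤ)-1 = (k:ℤ)-1+1 := by push_cast; ring
    rw [hvT (k+1), c1, c2, c3, ← mul_assoc]
    exact h
  have hxv : ∀ k : ℕ, x ((k:ℤ)-1) = v k / v (k+1) := by
    have H : ∀ k : ℕ, x ((k:ℤ)-1) = v k / v (k+1) ∧
        x (((k+1:ℕ):ℤ)-1) = v (k+1) / v (k+2) := by
      intro k
      induction k with
      | zero =>
        constructor
        · have h1 : v 1 ≠ 0 := hvne 0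
          rw [hv1] at h1
          norm_num [hv0, hv1]
          field_simp
        · norm_num [hv1, hv2]
      | succ n ih =>
        refine ⟨ih.2, ?_⟩
        have e : ((n+1+1:ℕ):ℤ) - 1 = ((n:ℤ)) + 1 := by push_cast; ring
        rw [e, hx n (Int.natCast_nonneg n)]
        have e1 : x ((n:ℤ)) = v (n+1) / v (n+2) := by
          have h := ih.2
          rw [show ((n+1:ℕ):ℤ)-1 = (n:ℤ) by push_cast; ring] at h
          exact h
        have e2 : x ((n:ℤ)-1) = v n / v (n+1) := ih.1
        rw [e1, e2]
        have h1 := hvne n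
        have h2 := hvne (n+1)
        have h3 := hvne (n+2)
        rw [hvr n] at h3
        have hv3 : v (n+1+2) = v (n+2) + v (n+1) + v n := hvr n
        rw [hv3]
        have h2' : v (n+2) ≠ 0 := h2
        have hD : v (n+1) / v (n+2) * (v n / v (n+1) + 1) + 1
            = (v (n+2) + v (n+1) + v n) / v (n+2) := by
          field_simp
          ring
        rw [hD, one_div_div]
    exact fun k => (H k).1
  constructor
  · have haux := triSeq_ratio_tendsto (x (-1) * x 0) (x 0) 1 φ hφ (by rw [mul_one]; exact hnd)
    refine haux.congr ?_
    intro n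
    have h := hxv (n+1)
    rw [show ((n+1:ℕ):ℤ)-1 = (n:ℤ) by push_cast; ring] at h
    exact h.symm
  · field_simp
    linear_combination (-1) * hφ
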